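/- For a cubic Hamiltonian vector field f = J∇H on ℝ^n, the function H̃(x,ε) = H(x) + (ε/3)(∇H(x))^T (I − (ε/2)f'(x))^{-1} f(x) is an integral of motion of the Kahan map: H̃(Φ_f(x,ε), ε) = H̃(x,ε) wherever both sides are defined. -/

import Mathlib

open Matrix

section KahanAux

open MvPolynomial
variable {n : ℕ}

noncomputable def gradCLM (p : MvPolynomial (Fin n) ℝ) (x : Fin n → ℝ) : (Fin n → ℝ) →L[ℝ] ℝ :=
  ∑ j, MvPolynomial.eval x (pderiv j p) • ContinuousLinearMap.proj j

lemma gradCLM_apply (p : MvPolynomial (Fin n) ℝ) (x v : Fin n → ℝ) :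
    gradCLM p x v = ∑ j, MvPolynomial.eval x (pderiv j p) * v j := by
  simp [gradCLM]

lemma hasFDerivAt_mveval (p : MvPolynomial (Fin n) ℝ) (x : Fin n → ℝ) :
    HasFDerivAt (fun y => MvPolynomial.eval y p) (gradCLM p x) x := by
  induction p using MvPolynomial.induction_on with
  | C a =>
      simp only [MvPolynomial.eval_C]
      have : gradCLM (n := n) (MvPolynomial.C a) x = 0 := by
        ext v; simp [gradCLM_apply]
      rw [this]
      exact hasFDerivAt_const _ _
  | add p q hp hq =>
      have : gradCLM (p + q) x = gradCLM p x + gradCLM q x := by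
        ext v; simp [gradCLM_apply, Finset.sum_add_distrib, add_mul]
      rw [this]
      have e : (fun y => MvPolynomial.eval y (p + q))
          = (fun y => MvPolynomial.eval y p) + (fun y => MvPolynomial.eval y q) := by
        funext y; simp
      rw [e]; exact hp.add hq
  | mul_X p i hp =>
      have h2 : HasFDerivAt (fun y : Fin n → ℝ => y i)
          (ContinuousLinearMap.proj (R := ℝ) (φ := fun _ : Fin n => ℝ) i) x :=
        (ContinuousLinearMap.proj (R := ℝ) (φ := fun _ : Fin n => ℝ) i).hasFDerivAt
      have key := hp.mul h2
      have heq : gradCLM (p * X i) x = MvPolynomial.eval x p •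
          ContinuousLinearMap.proj (R := ℝ) (φ := fun _ : Fin n => ℝ) i
            + x i • gradCLM p x := by
        ext v
        have e : ∀ j, MvPolynomial.eval x (pderiv j (p * X i))
            = MvPolynomial.eval x (pderiv j p) * x i
              + MvPolynomial.eval x p * (if i = j then 1 else 0) := by
          intro j
          rw [pderiv_mul, pderiv_X, Pi.single_apply]
          simp [apply_ite (MvPolynomial.eval x)]
        simp only [gradCLM_apply, ContinuousLinearMap.add_apply, ContinuousLinearMap.smul_apply,
          ContinuousLinearMap.proj_apply, smul_eq_mul]
        rw [Finset.sum_congr rfl fun j _ => by rw [e j]]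
        simp only [add_mul, Finset.sum_add_distrib, mul_ite, ite_mul, mul_one, zero_mul, mul_zero]
        rw [Finset.sum_ite_eq, Finset.mul_sum]
        simp only [Finset.mem_univ, if_true]
        have hs : (∑ j, MvPolynomial.eval x (pderiv j p) * x i * v j)
            = x i * ∑ j, MvPolynomial.eval x (pderiv j p) * v j := by
          rw [Finset.mul_sum]; exact Finset.sum_congr rfl fun j _ => by ring
        rw [hs, ← Finset.mul_sum]; ring
      rw [heq]
      have e : (fun y => MvPolynomial.eval y (p * X i))
          = (fun y => MvPolynomial.eval y p) * (fun y : Fin n → ℝ => y i) := by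
        funext y; simp
      rw [e]; exact key

lemma pderiv_comm' (i j : Fin n) (p : MvPolynomial (Fin n) ℝ) :
    pderiv i (pderiv j p) = pderiv j (pderiv i p) := by
  induction p using MvPolynomial.induction_on' with
  | monomial s a =>
      rcases eq_or_ne i j with rfl | hij
      · rfl
      · simp only [pderiv_monomial]
        have h1 : (s - Finsupp.single j 1 : Fin n →₀ ℕ) i = s i := by
          rw [Finsupp.tsub_apply, Finsupp.single_apply]
          simp [Ne.symm hij]
        have h2 : (s - Finsupp.single i 1 : Fin n →₀ ℕ) j = s j := by
          rw [Finsupp.tsub_apply, Finsupp.single_apply]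
          simp [hij]
        have h3 : s - Finsupp.single j 1 - Finsupp.single i 1
            = s - Finsupp.single i 1 - Finsupp.single j 1 := by
          ext a; simp only [Finsupp.tsub_apply]; omega
        rw [h1, h2, h3]
        ring_nf
  | add p q hp hq => simp [hp, hq]

lemma totalDegree_pderiv_le (p : MvPolynomial (Fin n) ℝ) (i : Fin n) :
    (pderiv i p).totalDegree ≤ p.totalDegree - 1 := by
  conv_lhs => rw [p.as_sum]
  rw [map_sum]
  refine (totalDegree_finset_sum _ _).trans (Finset.sup_le fun s hs => ?_)
  rw [pderiv_monomial]
  rcases Nat.eq_zero_or_pos (s i) with h0 | h1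
  · rw [h0]; simp
  · refine (totalDegree_monomial_le _ _).trans ?_
    have hle := le_totalDegree hs
    rw [Finsupp.sum_fintype _ _ (fun _ => rfl)] at hle ⊢
    have e1 : ∑ a, (s - Finsupp.single i 1 : Fin n →₀ ℕ) a
        = ∑ a, s a - ∑ a, (Finsupp.single i 1 : Fin n →₀ ℕ) a := by
      rw [← Finset.sum_tsub_distrib]
      · exact Finset.sum_congr rfl fun a _ => Finsupp.tsub_apply s (Finsupp.single i 1) a
      · intro a _
        rw [Finsupp.single_apply]
        split_ifs with h
        · subst h; omega
        · omega
    have e2 : ∑ a, (Finsupp.single i 1 : Fin n →₀ ℕ) a = 1 := by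
      rw [Finset.sum_eq_single i]
      · simp
      · intro b _ hb; rw [Finsupp.single_apply, if_neg (Ne.symm hb)]
      · intro h; exact absurd (Finset.mem_univ i) h
    simp only [id_eq] at *
    rw [e1, e2]
    omega

noncomputable def lineP (x d : Fin n → ℝ) (r : MvPolynomial (Fin n) ℝ) : Polynomial ℝ :=
  MvPolynomial.aeval (fun i => Polynomial.C (x i) + Polynomial.C (d i) * Polynomial.X) r

lemma lineP_eval (x d : Fin n → ℝ) (r : MvPolynomial (Fin n) ℝ) (t : ℝ) :
    (lineP x d r).eval t = MvPolynomial.eval (x + t • d) r := by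
  induction r using MvPolynomial.induction_on with
  | C a => simp [lineP]
  | add p q hp hq =>
      simp only [lineP] at hp hq ⊢
      rw [map_add, Polynomial.eval_add, hp, hq, map_add]
  | mul_X p i hp =>
      simp only [lineP] at hp ⊢
      rw [_root_.map_mul, MvPolynomial.aeval_X, Polynomial.eval_mul, hp, _root_.map_mul]
      simp only [Polynomial.eval_add, Polynomial.eval_mul, Polynomial.eval_C, Polynomial.eval_X,
        MvPolynomial.eval_X, Pi.add_apply, Pi.smul_apply, smul_eq_mul]
      ring

lemma lineP_natDegree_le (x d : Fin n → ℝ) (r : MvPolynomial (Fin n) ℝ) :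
    (lineP x d r).natDegree ≤ r.totalDegree := by
  rw [lineP, MvPolynomial.aeval_def, MvPolynomial.eval₂_eq]
  refine Polynomial.natDegree_sum_le_of_forall_le _ _ fun s hs => ?_
  refine (Polynomial.natDegree_mul_le).trans ?_
  rw [Polynomial.algebraMap_eq, Polynomial.natDegree_C, zero_add]
  refine (Polynomial.natDegree_prod_le _ _).trans ?_
  have hb : ∀ i, ((Polynomial.C (x i) + Polynomial.C (d i) * Polynomial.X) ^ (s i)).natDegree ≤ s i := by
    intro i
    refine (Polynomial.natDegree_pow_le).trans ?_
    have : (Polynomial.C (x i) + Polynomial.C (d i) * Polynomial.X).natDegree ≤ 1 := by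
      refine (Polynomial.natDegree_add_le _ _).trans ?_
      simp only [Polynomial.natDegree_C, max_le_iff]
      constructor
      · omega
      · exact (Polynomial.natDegree_mul_le).trans (by simp [Polynomial.natDegree_X_le])
    calc s i * (Polynomial.C (x i) + Polynomial.C (d i) * Polynomial.X).natDegree
        ≤ s i * 1 := Nat.mul_le_mul_left _ this
      _ = s i := mul_one _
  refine (Finset.sum_le_sum fun i _ => hb i).trans ?_
  exact le_totalDegree hs

lemma lineP_derivative (x d : Fin n → ℝ) (r : MvPolynomial (Fin n) ℝ) :
    (lineP x d r).derivative = ∑ j, Polynomial.C (d j) * lineP x d (pderiv j r) := by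
  set F : Fin n → Polynomial ℝ := fun i => Polynomial.C (x i) + Polynomial.C (d i) * Polynomial.X
    with hF
  induction r using MvPolynomial.induction_on with
  | C a => simp [lineP]
  | add p q hp hq =>
      simp only [lineP] at hp hq ⊢
      rw [map_add, Polynomial.derivative_add, hp, hq, ← Finset.sum_add_distrib]
      refine Finset.sum_congr rfl fun j _ => ?_
      rw [map_add, map_add, mul_add]
  | mul_X p i hp =>
      simp only [lineP] at hp ⊢
      rw [_root_.map_mul, MvPolynomial.aeval_X, Polynomial.derivative_mul, hp]
      have e : ∀ j : Fin n, Polynomial.C (d j) * MvPolynomial.aeval F (pderiv j (p * X i))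
          = Polynomial.C (d j) * (MvPolynomial.aeval F (pderiv j p) * F i)
            + (if i = j then Polynomial.C (d i) * MvPolynomial.aeval F p else 0) := by
        intro j
        rw [pderiv_mul, pderiv_X, Pi.single_apply]
        split_ifs with h
        · subst h
          rw [map_add, _root_.map_mul, _root_.map_mul, MvPolynomial.aeval_X, _root_.map_one,
            mul_one, mul_add]
        · rw [mul_zero, add_zero, _root_.map_mul, MvPolynomial.aeval_X]
          simp
      rw [Finset.sum_congr rfl fun j _ => e j, Finset.sum_add_distrib, Finset.sum_ite_eq]
      simp only [Finset.mem_univ, if_true, hF]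
      have hder : Polynomial.derivative (Polynomial.C (x i) + Polynomial.C (d i) * Polynomial.X)
          = Polynomial.C (d i) := by simp
      rw [Finset.sum_mul, hder]
      congr 1
      · exact Finset.sum_congr rfl fun j _ => mul_assoc _ _ _
      · ring

lemma poly_trap (q : Polynomial ℝ) (h : q.natDegree ≤ 2) :
    q.eval 1 - q.eval 0 = (q.derivative.eval 0 + q.derivative.eval 1) / 2 := by
  have h4 : q.natDegree < 3 := by omega
  have hd : q.derivative.natDegree < 2 := by
    have := Polynomial.natDegree_derivative_le q; omega
  rw [Polynomial.eval_eq_sum_range' h4, Polynomial.eval_eq_sum_range' h4,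
    Polynomial.eval_eq_sum_range' hd, Polynomial.eval_eq_sum_range' hd]
  simp only [Finset.sum_range_succ, Finset.sum_range_zero, Polynomial.coeff_derivative]
  norm_num
  ring

lemma poly_simpson (q : Polynomial ℝ) (h : q.natDegree ≤ 3) :
    q.eval 1 - q.eval 0
      = (q.derivative.eval 0 + 4 * q.derivative.eval (1/2) + q.derivative.eval 1) / 6 := by
  have h4 : q.natDegree < 4 := by omega
  have hd : q.derivative.natDegree < 3 := by
    have := Polynomial.natDegree_derivative_le q; omega
  rw [Polynomial.eval_eq_sum_range' h4, Polynomial.eval_eq_sum_range' h4,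
    Polynomial.eval_eq_sum_range' hd, Polynomial.eval_eq_sum_range' hd,
    Polynomial.eval_eq_sum_range' hd]
  simp only [Finset.sum_range_succ, Finset.sum_range_zero, Polynomial.coeff_derivative]
  norm_num
  ring

lemma lineP_deriv_eval (x d : Fin n → ℝ) (r : MvPolynomial (Fin n) ℝ) (t : ℝ) :
    (lineP x d r).derivative.eval t = ∑ j, d j * MvPolynomial.eval (x + t • d) (pderiv j r) := by
  rw [lineP_derivative]
  rw [Polynomial.eval_finset_sum]
  exact Finset.sum_congr rfl fun j _ => by rw [Polynomial.eval_mul, Polynomial.eval_C, lineP_eval]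

lemma mv_trap (r : MvPolynomial (Fin n) ℝ) (hr : r.totalDegree ≤ 2) (x y : Fin n → ℝ) :
    MvPolynomial.eval y r - MvPolynomial.eval x r
      = (∑ j, (MvPolynomial.eval x (pderiv j r) + MvPolynomial.eval y (pderiv j r))
            * (y j - x j)) / 2 := by
  set d : Fin n → ℝ := y - x with hd
  have h0 : x + (0:ℝ) • d = x := by simp
  have h1 : x + (1:ℝ) • d = y := by simp [hd]
  have ht := poly_trap (lineP x d r) ((lineP_natDegree_le x d r).trans hr)
  rw [lineP_eval, lineP_eval, lineP_deriv_eval, lineP_deriv_eval, h0, h1] at ht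
  rw [ht, ← Finset.sum_add_distrib]
  congr 1
  refine Finset.sum_congr rfl fun j _ => ?_
  have : d j = y j - x j := by simp [hd]
  rw [this]; ring

lemma mv_simpson (r : MvPolynomial (Fin n) ℝ) (hr : r.totalDegree ≤ 3) (x y : Fin n → ℝ) :
    MvPolynomial.eval y r - MvPolynomial.eval x r
      = (∑ j, (MvPolynomial.eval x (pderiv j r)
            + 4 * MvPolynomial.eval (x + (1/2 : ℝ) • (y - x)) (pderiv j r)
            + MvPolynomial.eval y (pderiv j r)) * (y j - x j)) / 6 := by
  set d : Fin n → ℝ := y - x with hd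
  have h0 : x + (0:ℝ) • d = x := by simp
  have h1 : x + (1:ℝ) • d = y := by simp [hd]
  have ht := poly_simpson (lineP x d r) ((lineP_natDegree_le x d r).trans hr)
  rw [lineP_eval, lineP_eval, lineP_deriv_eval, lineP_deriv_eval, lineP_deriv_eval,
    h0, h1] at ht
  rw [ht]
  rw [Finset.mul_sum, ← Finset.sum_add_distrib, ← Finset.sum_add_distrib]
  congr 1
  refine Finset.sum_congr rfl fun j _ => ?_
  have : d j = y j - x j := by simp [hd]
  rw [this]; ring

end KahanAux

open MvPolynomial

/-- The Celledoni–McLachlan–Owren–Quispel integral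
`H̃(x,ε) = H(x) + (ε/3) ∇H(x)ᵀ (I − (ε/2)f'(x))⁻¹ f(x)`
is conserved by the Kahan map of a cubic Hamiltonian vector field `f = J∇H`. -/
theorem kahan_CMOQ_integral {n : ℕ}
    (J : Matrix (Fin n) (Fin n) ℝ) (hJ : Jᵀ = -J)
    (p : MvPolynomial (Fin n) ℝ) (hp : p.totalDegree ≤ 3)
    (H : (Fin n → ℝ) → ℝ) (hH : ∀ x, H x = MvPolynomial.eval x p)
    (g : (Fin n → ℝ) → (Fin n → ℝ)) (hg : ∀ x v, fderiv ℝ H x v = g x ⬝ᵥ v)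
    (f : (Fin n → ℝ) → (Fin n → ℝ)) (hf : ∀ x, f x = J.mulVec (g x))
    (M : (Fin n → ℝ) → Matrix (Fin n) (Fin n) ℝ)
    (hM : ∀ x v, (M x).mulVec v = fderiv ℝ f x v)
    (ε : ℝ)
    (Φ : (Fin n → ℝ) → (Fin n → ℝ))
    (hΦ : ∀ x, Φ x = x + ε • ((1 - (ε / 2) • M x)⁻¹.mulVec (f x)))
    (Htil : (Fin n → ℝ) → ℝ)
    (hHtil : ∀ x, Htil x =
      H x + (ε / 3) * (g x ⬝ᵥ ((1 - (ε / 2) • M x)⁻¹.mulVec (f x))))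
    (x : Fin n → ℝ)
    (hx : IsUnit (1 - (ε / 2) • M x).det)
    (hΦx : IsUnit (1 - (ε / 2) • M (Φ x)).det) :
    Htil (Φ x) = Htil x := by
  -- gradient components are polynomial evaluations
  have hHf : H = fun z => MvPolynomial.eval z p := funext hH
  have hfd : ∀ z : Fin n → ℝ, fderiv ℝ H z = gradCLM p z := fun z => by
    rw [hHf]; exact (hasFDerivAt_mveval p z).fderiv
  have hgj : ∀ (z : Fin n → ℝ) (j : Fin n), g z j = MvPolynomial.eval z (pderiv j p) := by
    intro z j
    have h1 := (hg z (Pi.single j 1)).symm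
    rw [hfd z, dotProduct_single, mul_one, gradCLM_apply] at h1
    rw [h1, Finset.sum_eq_single j]
    · simp
    · intro b _ hb; rw [Pi.single_apply, if_neg hb, mul_zero]
    · intro h; exact absurd (Finset.mem_univ j) h
  -- the components of f as polynomials
  set Q : Fin n → MvPolynomial (Fin n) ℝ :=
    fun i => ∑ k, MvPolynomial.C (J i k) * pderiv k p with hQ
  have hfQ : ∀ (z : Fin n → ℝ) (i : Fin n), f z i = MvPolynomial.eval z (Q i) := by
    intro z i
    rw [hf z, hQ]
    simp only [map_sum, _root_.map_mul, MvPolynomial.eval_C]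
    simp only [Matrix.mulVec, dotProduct]
    exact Finset.sum_congr rfl fun k _ => by rw [hgj z k]
  have hQdeg : ∀ i, (Q i).totalDegree ≤ 2 := by
    intro i
    rw [hQ]
    refine (totalDegree_finset_sum _ _).trans (Finset.sup_le fun k _ => ?_)
    refine (totalDegree_mul _ _).trans ?_
    have h1 := totalDegree_pderiv_le p k
    have h2 : (MvPolynomial.C (J i k) : MvPolynomial (Fin n) ℝ).totalDegree = 0 :=
      totalDegree_C _
    omega
  -- derivative of f
  have hfD : ∀ z : Fin n → ℝ, HasFDerivAt f
      (ContinuousLinearMap.pi fun i => gradCLM (Q i) z) z := by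
    intro z
    refine hasFDerivAt_pi'' fun i => ?_
    have : (fun w : Fin n → ℝ => f w i) = fun w => MvPolynomial.eval w (Q i) :=
      funext fun w => hfQ w i
    rw [this, ContinuousLinearMap.proj_pi]
    exact hasFDerivAt_mveval (Q i) z
  have hMv : ∀ (z v : Fin n → ℝ),
      (M z).mulVec v = fun i => ∑ j, MvPolynomial.eval z (pderiv j (Q i)) * v j := by
    intro z v
    rw [hM z v, (hfD z).fderiv]
    funext i
    rw [ContinuousLinearMap.pi_apply, gradCLM_apply]
  have hMent : ∀ (z : Fin n → ℝ) (i j : Fin n),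
      M z i j = MvPolynomial.eval z (pderiv j (Q i)) := by
    intro z i j
    have h1 := congrFun (hMv z (Pi.single j 1)) i
    simp only [Matrix.mulVec_single_one, Matrix.col_apply, mul_one] at h1
    rw [h1, Finset.sum_eq_single j]
    · simp
    · intro b _ hb; rw [Pi.single_apply, if_neg hb, mul_zero]
    · intro h; exact absurd (Finset.mem_univ j) h
  -- Hessian symmetry
  set S : (Fin n → ℝ) → Matrix (Fin n) (Fin n) ℝ :=
    fun z => Matrix.of fun i j => MvPolynomial.eval z (pderiv i (pderiv j p)) with hS
  have hSsymm : ∀ z, (S z)ᵀ = S z := by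
    intro z; ext i j
    simp only [hS, Matrix.transpose_apply, Matrix.of_apply]
    exact congrArg _ (pderiv_comm' j i p)
  have hMS : ∀ z, M z = J * S z := by
    intro z; ext i j
    rw [hMent z i j, Matrix.mul_apply, hQ]
    simp only [map_sum, pderiv_C_mul, _root_.map_mul, MvPolynomial.eval_C]
    refine Finset.sum_congr rfl fun k _ => ?_
    rw [hS]
    simp only [Matrix.of_apply]
    rw [pderiv_comm']
  -- trapezoidal rule for the quadratic vector field f
  have trapf : ∀ a b : Fin n → ℝ,
      f b - f a = (1/2 : ℝ) • ((M a + M b).mulVec (b - a)) := by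
    intro a b
    funext i
    simp only [Pi.sub_apply, Pi.smul_apply, smul_eq_mul]
    rw [hfQ a i, hfQ b i, mv_trap (Q i) (hQdeg i) a b]
    simp only [Matrix.mulVec, dotProduct, Matrix.add_apply, Pi.sub_apply]
    have hsum : (∑ j, (M a i j + M b i j) * (b j - a j))
        = ∑ j, (MvPolynomial.eval a (pderiv j (Q i)) + MvPolynomial.eval b (pderiv j (Q i)))
            * (b j - a j) :=
      Finset.sum_congr rfl fun j _ => by rw [hMent a i j, hMent b i j]
    rw [hsum]
    ring
  -- setup: the Kahan step
  set y := Φ x with hyy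
  set u := (1 - (ε / 2) • M x)⁻¹.mulVec (f x) with hu
  have hy : y = x + ε • u := hΦ x
  have hyx : y - x = ε • u := by rw [hy]; exact add_sub_cancel_left x (ε • u)
  have E1 : u - (ε/2) • (M x).mulVec u = f x := by
    have h1 : (1 - (ε / 2) • M x).mulVec u = f x := by
      rw [hu, Matrix.mulVec_mulVec, Matrix.mul_nonsing_inv _ hx, Matrix.one_mulVec]
    rw [← h1, Matrix.sub_mulVec, Matrix.one_mulVec, Matrix.smul_mulVec]
  have E2 : u + (ε/2) • (M y).mulVec u = f y := by
    have h2 : f y - f x = (1/2 : ℝ) • (ε • ((M x).mulVec u + (M y).mulVec u)) := by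
      have h3 := trapf x y
      rw [hyx, Matrix.mulVec_smul, Matrix.add_mulVec] at h3
      exact h3
    linear_combination (norm := module) E1 - h2
  -- invertibility of B = 1 + (ε/2) M y
  set A' := 1 - (ε / 2) • M y with hA'
  have hA'T : A'ᵀ = 1 + (ε/2) • (S y * J) := by
    rw [hA', Matrix.transpose_sub, Matrix.transpose_one, Matrix.transpose_smul, hMS y,
      Matrix.transpose_mul, hSsymm y, hJ, Matrix.mul_neg, smul_neg, sub_neg_eq_add]
  set B := 1 + (ε / 2) • M y with hB
  have hdetB : B.det = A'.det := by
    rw [hB, hMS y, ← Matrix.smul_mul, Matrix.det_one_add_mul_comm, Matrix.mul_smul,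
      ← hA'T, Matrix.det_transpose]
  have hdetBu : IsUnit B.det := by rw [hdetB]; exact hΦx
  have hBu : B.mulVec u = f y := by
    rw [hB, Matrix.add_mulVec, Matrix.one_mulVec, Matrix.smul_mulVec]; exact E2
  have hu2 : u = (B⁻¹ * J).mulVec (g y) := by
    have h1 : B⁻¹.mulVec (B.mulVec u) = u := by
      rw [Matrix.mulVec_mulVec, Matrix.nonsing_inv_mul _ hdetBu, Matrix.one_mulVec]
    rw [← h1, hBu, hf y, Matrix.mulVec_mulVec]
  set w := A'⁻¹.mulVec (f y) with hw
  have hw2 : w = (A'⁻¹ * J).mulVec (g y) := by rw [hw, hf y, Matrix.mulVec_mulVec]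
  have hA'Tu : IsUnit (A'ᵀ).det := by rw [Matrix.det_transpose]; exact hΦx
  have hJB : J * A'ᵀ = B * J := by
    rw [hA'T, hB, hMS y, Matrix.mul_add, Matrix.add_mul, Matrix.mul_one, Matrix.one_mul,
      Matrix.mul_smul, Matrix.smul_mul, ← Matrix.mul_assoc]
  have hJBinv : J * (A'ᵀ)⁻¹ = B⁻¹ * J := by
    calc J * (A'ᵀ)⁻¹ = (B⁻¹ * B) * (J * (A'ᵀ)⁻¹) := by
          rw [Matrix.nonsing_inv_mul _ hdetBu, Matrix.one_mul]
      _ = B⁻¹ * ((J * A'ᵀ) * (A'ᵀ)⁻¹) := by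
          rw [Matrix.mul_assoc, ← Matrix.mul_assoc B J, ← hJB]
      _ = B⁻¹ * J := by
          rw [Matrix.mul_assoc J, Matrix.mul_nonsing_inv _ hA'Tu, Matrix.mul_one]
  have hPT : (A'⁻¹ * J)ᵀ = -(B⁻¹ * J) := by
    rw [Matrix.transpose_mul, Matrix.transpose_nonsing_inv, hJ, Matrix.neg_mul, ← hJBinv,
      ← Matrix.mul_neg]
  -- key identity: g y ⬝ w = -(g y ⬝ u)
  have key : g y ⬝ᵥ w = -(g y ⬝ᵥ u) := by
    rw [hw2, hu2, Matrix.dotProduct_mulVec, ← Matrix.mulVec_transpose, hPT, Matrix.neg_mulVec,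
      neg_dotProduct, dotProduct_comm]
  -- polarization: the Kahan increment is J applied to the polarized gradient
  set mid := x + (1/2 : ℝ) • (y - x) with hmid
  have hmidx : mid - x = (1/2 : ℝ) • (ε • u) := by
    rw [hmid, hyx]; exact add_sub_cancel_left x _
  have hymid : y - mid = (1/2 : ℝ) • (ε • u) := by
    rw [hmid, hyx, hy]; module
  have t1 : f mid - f x = (1/2 : ℝ) • ((1/2 : ℝ) • (ε • ((M x).mulVec u + (M mid).mulVec u))) := by
    have h3 := trapf x mid
    rw [hmidx, Matrix.mulVec_smul, Matrix.mulVec_smul, Matrix.add_mulVec] at h3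
    exact h3
  have t2 : f y - f mid = (1/2 : ℝ) • ((1/2 : ℝ) • (ε • ((M mid).mulVec u + (M y).mulVec u))) := by
    have h3 := trapf mid y
    rw [hymid, Matrix.mulVec_smul, Matrix.mulVec_smul, Matrix.add_mulVec] at h3
    exact h3
  have hfm : (2 : ℝ) • f mid - (1/2 : ℝ) • (f x + f y) = u := by
    linear_combination (norm := module) t1 - t2 - (1/2 : ℝ) • E1 - (1/2 : ℝ) • E2
  set m := (2 : ℝ) • g mid - (1/2 : ℝ) • (g x + g y) with hm
  have hJm : J.mulVec m = u := by
    rw [hm]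
    have h4 : J.mulVec ((2:ℝ) • g mid - (1/2:ℝ) • (g x + g y))
        = (2:ℝ) • f mid - (1/2:ℝ) • (f x + f y) := by
      rw [hf x, hf y, hf mid, Matrix.mulVec_sub, Matrix.mulVec_smul, Matrix.mulVec_smul,
        Matrix.mulVec_add]
    rw [h4, hfm]
  have hmu : m ⬝ᵥ u = 0 := by
    have h1 : m ⬝ᵥ u = m ⬝ᵥ (J.mulVec m) := by rw [hJm]
    have h2 : m ⬝ᵥ (J.mulVec m) = -(m ⬝ᵥ (J.mulVec m)) := by
      conv_lhs => rw [Matrix.dotProduct_mulVec, ← Matrix.mulVec_transpose, hJ,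
        Matrix.neg_mulVec, neg_dotProduct, dotProduct_comm]
    rw [h1]
    linarith [h2]
  -- Simpson's rule for H
  have hyxj : ∀ j, y j - x j = ε * u j := by
    intro j
    have := congrFun hyx j
    simpa using this
  have hsimp : H y - H x
      = (ε * (g x ⬝ᵥ u) + 4 * (ε * (g mid ⬝ᵥ u)) + ε * (g y ⬝ᵥ u)) / 6 := by
    rw [hH x, hH y, mv_simpson p hp x y, ← hmid]
    congr 1
    have hsum : (∑ j, (MvPolynomial.eval x (pderiv j p) + 4 * MvPolynomial.eval mid (pderiv j p)
          + MvPolynomial.eval y (pderiv j p)) * (y j - x j))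
        = ∑ j, (g x j * (ε * u j) + 4 * (g mid j * (ε * u j)) + g y j * (ε * u j)) := by
      refine Finset.sum_congr rfl fun j _ => ?_
      rw [← hgj x j, ← hgj mid j, ← hgj y j, hyxj j]
      ring
    rw [hsum]
    simp only [dotProduct, Finset.mul_sum, ← Finset.sum_add_distrib]
    exact Finset.sum_congr rfl fun j _ => by ring
  have hmu' : 2 * (g mid ⬝ᵥ u) - (1/2) * (g x ⬝ᵥ u + g y ⬝ᵥ u) = 0 := by
    rw [← hmu, hm, sub_dotProduct, smul_dotProduct, smul_dotProduct,
      add_dotProduct]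
    simp only [smul_eq_mul]
  -- conclusion
  rw [hHtil, hHtil x, ← hA', ← hw, ← hu, key]
  linear_combination hsimp + (ε/3) * hmu'
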